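/- Let P₀ be a finite poset with elements x₁,…,x_{m₀}, and S ⊆ |P₀| a chain in P₀. Fix nonnegative values mᵢ for all i with xᵢ ∉ S, and let f be the polynomial in the card(S) variables mᵢ (xᵢ ∈ S) that gives L₊(P₀; m₁,…,m_{m₀}) as a function of those variables. Then the total degree of f equals the sum of the values mᵢ over those xᵢ ∉ S that are incomparable in P₀ with at least one element of S. -/

import Mathlib

open scoped Classical

/-- Underlying set of the lexicographic sum over `Fin m₀` of chains `C i` of `m i` elements. -/
abbrev LexSumChains (m₀ : ℕ) (m : Fin m₀ → ℕ) : Type := Σ i : Fin m₀, Fin (m i)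

/-- The order of the lexicographic sum `P₀ * (C₁, …, C_{m₀})` of chains over the poset
`(Fin m₀, r0)`: within a chain elements keep their order, and an element of `C i` is below an
element of `C i'` (for `i ≠ i'`) iff `xᵢ ≺₀ x_{i'}`. -/
def lexRel {m₀ : ℕ} (r0 : Fin m₀ → Fin m₀ → Prop) (m : Fin m₀ → ℕ)
    (x y : LexSumChains m₀ m) : Prop :=
  (x.1 = y.1 ∧ (x.2 : ℕ) ≤ (y.2 : ℕ)) ∨ (x.1 ≠ y.1 ∧ r0 x.1 y.1)

/-- `φ` is (the isotone bijection corresponding to) a linearization of the lexicographic sum. -/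
def IsLin {m₀ : ℕ} (r0 : Fin m₀ → Fin m₀ → Prop) (m : Fin m₀ → ℕ)
    (φ : LexSumChains m₀ m ≃ Fin (∑ i, m i)) : Prop :=
  ∀ x y, lexRel r0 m x y → φ x ≤ φ y

/-- `b` is the reference ordering, listing the elements `x_{i,j}` in lexicographic order
of the pairs `(i,j)`. -/
def IsRef {m₀ : ℕ} (m : Fin m₀ → ℕ) (b : LexSumChains m₀ m ≃ Fin (∑ i, m i)) : Prop :=
  ∀ x y : LexSumChains m₀ m,
    (x.1 < y.1 ∨ (x.1 = y.1 ∧ (x.2 : ℕ) ≤ (y.2 : ℕ))) → b x ≤ b y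

/-- `L₊(P₀; m₁, …, m_{m₀})`, the number of linearizations of the lexicographic sum of chains. -/
noncomputable def Lplus (m₀ : ℕ) (r0 : Fin m₀ → Fin m₀ → Prop) (m : Fin m₀ → ℕ) : ℕ :=
  Nat.card {φ : LexSumChains m₀ m ≃ Fin (∑ i, m i) // IsLin r0 m φ}

/-- `L₋(P₀; m₁, …, m_{m₀})`, the sign-imbalance (number of even minus number of odd
linearizations) relative to the reference ordering `b`. -/
noncomputable def Lminus (m₀ : ℕ) (r0 : Fin m₀ → Fin m₀ → Prop) (m : Fin m₀ → ℕ)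
    (b : LexSumChains m₀ m ≃ Fin (∑ i, m i)) : ℤ :=
  ∑ φ : LexSumChains m₀ m ≃ Fin (∑ i, m i),
    if IsLin r0 m φ then ((Equiv.Perm.sign (b.symm.trans φ)) : ℤ) else 0


section AuxiliaryLemmas
open Finset

section Rank
variable {γ : Type*} [Fintype γ] {K : Type*} [LinearOrder K]

noncomputable def rk (κ : γ → K) (x : γ) : ℕ := (univ.filter fun z => κ z < κ x).card

lemma rk_lt_rk {κ : γ → K} {x y : γ} (h : κ x < κ y) : rk κ x < rk κ y := by
  apply Finset.card_lt_card
  constructor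
  · intro z hz; simp only [mem_filter, mem_univ, true_and] at *; exact hz.trans h
  · intro hsub
    have hx : x ∈ univ.filter fun z => κ z < κ y := by simp [h]
    have := hsub hx; simp at this

lemma rk_lt_iff {κ : γ → K} (hκ : Function.Injective κ) {x y : γ} :
    rk κ x < rk κ y ↔ κ x < κ y := by
  constructor
  · intro h
    rcases lt_trichotomy (κ x) (κ y) with h1 | h1 | h1
    · exact h1
    · exact absurd (hκ h1) (by rintro rfl; exact lt_irrefl _ h)
    · exact absurd (rk_lt_rk h1) (by omega)
  · exact rk_lt_rk

lemma rk_lt_card (κ : γ → K) (x : γ) : rk κ x < Fintype.card γ := by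
  have : (univ.filter fun z => κ z < κ x) ⊂ univ :=
    Finset.filter_ssubset.2 ⟨x, mem_univ x, by simp⟩
  have h2 := Finset.card_lt_card this
  rwa [Finset.card_univ] at h2

lemma rk_injective {κ : γ → K} (hκ : Function.Injective κ) : Function.Injective (rk κ) := by
  intro x y h
  rcases lt_trichotomy (κ x) (κ y) with h1 | h1 | h1
  · exact absurd (rk_lt_rk h1) (by omega)
  · exact hκ h1
  · exact absurd (rk_lt_rk h1) (by omega)

noncomputable def rkEquiv (κ : γ → K) (hκ : Function.Injective κ) : γ ≃ Fin (Fintype.card γ) :=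
  Equiv.ofBijective (fun x => ⟨rk κ x, rk_lt_card κ x⟩)
    ((Fintype.bijective_iff_injective_and_card _).2
      ⟨fun x y h => rk_injective hκ (by simpa [Fin.ext_iff] using h), by simp⟩)

lemma rkEquiv_lt_iff {κ : γ → K} (hκ : Function.Injective κ) {x y : γ} :
    rkEquiv κ hκ x < rkEquiv κ hκ y ↔ κ x < κ y := by
  simp only [rkEquiv, Equiv.ofBijective_apply, Fin.lt_def]
  exact rk_lt_iff hκ

lemma rkEquiv_le {κ : γ → K} (hκ : Function.Injective κ) {x y : γ} (h : κ x ≤ κ y) :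
    rkEquiv κ hκ x ≤ rkEquiv κ hκ y := by
  rcases eq_or_lt_of_le h with h1 | h1
  · exact le_of_eq (congrArg _ (hκ h1))
  · exact le_of_lt ((rkEquiv_lt_iff hκ).2 h1)

noncomputable def rkEquiv' (κ : γ → K) (hκ : Function.Injective κ) {n : ℕ}
    (h : Fintype.card γ = n) : γ ≃ Fin n := (rkEquiv κ hκ).trans (finCongr h)

lemma rkEquiv'_lt_iff {κ : γ → K} (hκ : Function.Injective κ) {n : ℕ}
    (h : Fintype.card γ = n) {x y : γ} :
    rkEquiv' κ hκ h x < rkEquiv' κ hκ h y ↔ κ x < κ y := by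
  rw [← rkEquiv_lt_iff hκ (x := x) (y := y)]
  simp only [rkEquiv', Equiv.trans_apply, Fin.lt_def, finCongr_apply, Fin.coe_cast]

lemma rkEquiv'_le {κ : γ → K} (hκ : Function.Injective κ) {n : ℕ}
    (h : Fintype.card γ = n) {x y : γ} (hxy : κ x ≤ κ y) :
    rkEquiv' κ hκ h x ≤ rkEquiv' κ hκ h y := by
  have := rkEquiv_le hκ hxy (x := x) (y := y)
  simp only [rkEquiv', Equiv.trans_apply, Fin.le_def, finCongr_apply, Fin.coe_cast]
  exact this
end Rank


section Perm
-- a permutation of Fin n fixing the complement of P pointwise and strictly monotone on P is the identity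
lemma perm_fix {n : ℕ} (ρ : Equiv.Perm (Fin n)) (P : Finset (Fin n))
    (hfix : ∀ a, a ∉ P → ρ a = a)
    (hmono : ∀ a ∈ P, ∀ b ∈ P, a < b → ρ a < ρ b) : ∀ a, ρ a = a := by
  have hmaps : ∀ a ∈ P, ρ a ∈ P := by
    intro a ha
    by_contra hr
    have h1 : ρ (ρ a) = ρ a := hfix _ hr
    have h2 : ρ a = a := ρ.injective h1
    exact hr (by rw [h2]; exact ha)
  have hmaps' : ∀ a ∈ P, ρ.symm a ∈ P := by
    intro a ha
    by_contra hr
    have h1 : ρ (ρ.symm a) = ρ.symm a := hfix _ hr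
    have : (ρ.symm a) = a := by
      conv_lhs => rw [← ρ.apply_symm_apply (ρ.symm a)]
      rw [← h1]; simp
    exact hr (by rw [this]; exact ha)
  -- ∀ a ∈ P, a ≤ ρ a by strong induction
  have hle : ∀ a : Fin n, a ∈ P → a ≤ ρ a := by
    intro a
    induction a using WellFoundedLT.induction with
    | ind a IH =>
      intro ha
      by_contra hlt
      push_neg at hlt
      have hρa : ρ a ∈ P := hmaps a ha
      have h1 : ρ a ≤ ρ (ρ a) := IH _ hlt hρa
      have h2 : ρ (ρ a) < ρ a := hmono _ hρa _ ha hlt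
      exact absurd h1 (not_le_of_gt h2)
  have hles : ∀ a : Fin n, a ∈ P → a ≤ ρ.symm a := by
    intro a
    induction a using WellFoundedLT.induction with
    | ind a IH =>
      intro ha
      by_contra hlt
      push_neg at hlt
      have hρa : ρ.symm a ∈ P := hmaps' a ha
      have h1 : ρ.symm a ≤ ρ.symm (ρ.symm a) := IH _ hlt hρa
      -- ρ.symm strictly mono on P: from hmono
      have h2 : ρ.symm (ρ.symm a) < ρ.symm a := by
        rcases lt_trichotomy (ρ.symm (ρ.symm a)) (ρ.symm a) with h | h | h
        · exact h
        · have := congrArg ρ h; simp at this; omega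
        · have := hmono _ hρa _ (hmaps' _ hρa) h
          simp at this; omega
      exact absurd h1 (not_le_of_gt h2)
  intro a
  by_cases ha : a ∈ P
  · have h1 : a ≤ ρ a := hle a ha
    have h2 : ρ a ≤ ρ.symm (ρ a) := hles _ (hmaps a ha)
    rw [ρ.symm_apply_apply] at h2
    exact le_antisymm h2 h1
  · exact hfix a ha
end Perm

section BaseArith
variable {B2 B3 : ℕ}

lemma base_lt₁ {a a' b b' c c' : ℕ} (hb : b < B2) (hc : c < B3) (h : a < a') :
    (a * B2 + b) * B3 + c < (a' * B2 + b') * B3 + c' := by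
  have h1 : (a * B2 + b) * B3 + c < (a * B2 + B2) * B3 := by nlinarith
  have h2 : (a * B2 + B2) * B3 ≤ (a' * B2 + b') * B3 := by
    have : a * B2 + B2 ≤ a' * B2 := by nlinarith
    nlinarith
  omega

lemma base_lt₂ {a b b' c c' : ℕ} (hc : c < B3) (h : b < b') :
    (a * B2 + b) * B3 + c < (a * B2 + b') * B3 + c' := by nlinarith

lemma base_lt₃ {a b c c' : ℕ} (h : c < c') :
    (a * B2 + b) * B3 + c < (a * B2 + b) * B3 + c' := by omega

lemma base_inj {a a' b b' c c' : ℕ} (hb : b < B2) (hb' : b' < B2) (hc : c < B3) (hc' : c' < B3)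
    (h : (a * B2 + b) * B3 + c = (a' * B2 + b') * B3 + c') : a = a' ∧ b = b' ∧ c = c' := by
  rcases lt_trichotomy a a' with h1 | h1 | h1
  · exact absurd h (Nat.ne_of_lt (base_lt₁ hb hc h1))
  · subst h1
    rcases lt_trichotomy b b' with h2 | h2 | h2
    · exact absurd h (Nat.ne_of_lt (base_lt₂ hc h2))
    · subst h2; omega
    · exact absurd h.symm (Nat.ne_of_lt (base_lt₂ hc' h2))
  · exact absurd h.symm (Nat.ne_of_lt (base_lt₁ hb' hc' h1))

lemma base2_lt {Q : ℕ} {a a' b b' : ℕ} (hb : b < Q) (h : a < a') :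
    a * Q + b < a' * Q + b' := by nlinarith
end BaseArith


section MvZero
open MvPolynomial
theorem mv_eq_zero_fin : ∀ (n : ℕ) (f : MvPolynomial (Fin n) ℚ),
    (∀ v : Fin n → ℕ, eval (fun i => (v i : ℚ)) f = 0) → f = 0 := by
  intro n
  induction n with
  | zero =>
    intro f h
    rw [f.eq_C_of_isEmpty]
    have := h (fun i => 0)
    rw [f.eq_C_of_isEmpty, eval_C] at this
    rw [this, map_zero]
  | succ n IH =>
    intro f h
    have key : ∀ k : ℕ, (MvPolynomial.finSuccEquiv ℚ n f).coeff k = 0 := by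
      intro k
      apply IH
      intro v
      set Q : Polynomial ℚ := Polynomial.map (eval fun i => (v i : ℚ)) (MvPolynomial.finSuccEquiv ℚ n f) with hQ
      have hroot : ∀ t : ℕ, Polynomial.IsRoot Q (t : ℚ) := by
        intro t
        rw [Polynomial.IsRoot, hQ, ← MvPolynomial.eval_eq_eval_mv_eval']
        have e : (Fin.cons (t:ℚ) (fun i => (v i : ℚ)) : Fin (n+1) → ℚ) =
            fun i => ((Fin.cons t v : Fin (n+1) → ℕ) i : ℚ) := by
          funext i
          refine Fin.cases ?_ ?_ i <;> simp
        rw [e]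
        exact h _
      have hQ0 : Q = 0 := by
        apply Polynomial.eq_zero_of_infinite_isRoot
        apply Set.Infinite.mono (s := Set.range (fun t : ℕ => (t : ℚ)))
        · rintro x ⟨t, rfl⟩; exact hroot t
        · exact Set.infinite_range_of_injective Nat.cast_injective
      have := congrArg (fun p => p.coeff k) hQ0
      simpa [hQ, Polynomial.coeff_map] using this
    have : MvPolynomial.finSuccEquiv ℚ n f = 0 := Polynomial.ext fun k => by simpa using key k
    have h2 := congrArg (MvPolynomial.finSuccEquiv ℚ n).symm this
    simpa using h2

theorem mv_exists_nat_eval_ne_zero {σ : Type*} [Fintype σ] (f : MvPolynomial σ ℚ) (hf : f ≠ 0) :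
    ∃ a : σ → ℕ, eval (fun i => (a i : ℚ)) f ≠ 0 := by
  by_contra h
  push_neg at h
  apply hf
  let e := Fintype.equivFin σ
  have : rename e f = 0 := by
    apply mv_eq_zero_fin
    intro v
    rw [eval_rename]
    exact h _
  have h0 : rename e f = rename e 0 := by simpa using this
  exact rename_injective e e.injective h0


end MvZero

section Analytic
open Polynomial Filter
lemma eventually_pos (p : ℚ[X]) (hdeg : 0 < p.degree) (hlc : 0 < p.leadingCoeff) :
    ∀ᶠ n : ℕ in atTop, 0 < p.eval (n : ℚ) := by
  set P : ℝ[X] := p.map (algebraMap ℚ ℝ) with hP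
  have hinj : Function.Injective (algebraMap ℚ ℝ) := (algebraMap ℚ ℝ).injective
  have hdeg' : 0 < P.degree := by rwa [hP, degree_map_eq_of_injective hinj]
  have hlc' : 0 ≤ P.leadingCoeff := by
    rw [hP, leadingCoeff_map_of_injective hinj]
    have : (0:ℝ) < ((p.leadingCoeff : ℚ) : ℝ) := by exact_mod_cast hlc
    rw [eq_ratCast (algebraMap ℚ ℝ)]; exact this.le
  have ht : Tendsto (fun x : ℝ => P.eval x) atTop atTop :=
    P.tendsto_atTop_of_leadingCoeff_nonneg hdeg' hlc'
  have ht2 : Tendsto (fun n : ℕ => P.eval (n : ℝ)) atTop atTop :=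
    ht.comp tendsto_natCast_atTop_atTop
  have := ht2.eventually_gt_atTop 0
  filter_upwards [this] with n hn
  have he : P.eval ((n:ℕ) : ℝ) = algebraMap ℚ ℝ (p.eval (n:ℚ)) := by
    rw [hP, Polynomial.eval_map]
    exact Polynomial.eval₂_at_natCast _ n
  rw [he] at hn
  have : (0:ℝ) < ((p.eval (n:ℚ) : ℚ) : ℝ) := hn
  exact_mod_cast this

lemma leadingCoeff_pos_of_eval_nat_nonneg (q : ℚ[X]) (hq : q ≠ 0) (hdeg : 0 < q.degree)
    (h0 : ∀ n : ℕ, 0 ≤ q.eval (n:ℚ)) : 0 < q.leadingCoeff := by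
  rcases lt_trichotomy q.leadingCoeff 0 with h | h | h
  · exfalso
    have := eventually_pos (-q) (by rwa [degree_neg]) (by rwa [leadingCoeff_neg, neg_pos])
    obtain ⟨n, hn⟩ := this.exists
    rw [Polynomial.eval_neg] at hn
    exact absurd (h0 n) (by linarith)
  · exact absurd (leadingCoeff_eq_zero.1 h) hq
  · exact h

lemma natDegree_le_of_bounded (q : ℚ[X]) (Cu : ℚ) (d : ℕ)
    (h0 : ∀ n : ℕ, 0 ≤ q.eval (n:ℚ))
    (hb : ∀ n : ℕ, q.eval (n:ℚ) ≤ Cu * ((n:ℚ)+1)^d) : q.natDegree ≤ d := by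
  by_contra hq
  push_neg at hq
  have hq0 : q ≠ 0 := by
    intro h
    rw [h, natDegree_zero] at hq
    omega
  have hdq : 0 < q.degree := natDegree_pos_iff_degree_pos.1 (by omega)
  have hlc : 0 < q.leadingCoeff := leadingCoeff_pos_of_eval_nat_nonneg q hq0 hdq h0
  set r : ℚ[X] := Polynomial.C Cu * (Polynomial.X + 1)^d with hr
  have hrd : r.natDegree ≤ d := by
    refine le_trans (natDegree_mul_le) ?_
    simp only [natDegree_C, zero_add]
    refine le_trans (natDegree_pow_le) ?_
    have h1 : (Polynomial.X + 1 : ℚ[X]).natDegree ≤ 1 := by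
      have := Polynomial.natDegree_X_add_C (1:ℚ)
      simp only [Polynomial.C_1] at this
      exact this.le
    nlinarith
  have hdlt : r.degree < q.degree := degree_lt_degree (by omega)
  set s : ℚ[X] := -r + q with hs
  have hsl : s.leadingCoeff = q.leadingCoeff := by
    rw [hs]
    exact leadingCoeff_add_of_degree_lt (by rwa [degree_neg])
  have hsd : s.degree = q.degree := by
    rw [hs]
    exact degree_add_eq_right_of_degree_lt (by rwa [degree_neg])
  have := eventually_pos s (by rwa [hsd]) (by rwa [hsl])
  obtain ⟨n, hn⟩ := this.exists
  rw [hs] at hn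
  simp only [Polynomial.eval_add, Polynomial.eval_neg, hr, Polynomial.eval_mul,
    Polynomial.eval_C, Polynomial.eval_pow, Polynomial.eval_X, Polynomial.eval_one] at hn
  exact absurd (hb n) (by linarith)

lemma le_natDegree_of_lb (q : ℚ[X]) (d : ℕ) (hd : 0 < d) (K : ℚ) (n₀ : ℕ)
    (h : ∀ n : ℕ, n₀ ≤ n → (n:ℚ)^d ≤ K * q.eval (n:ℚ)) : d ≤ q.natDegree := by
  by_contra hq
  push_neg at hq
  set s : ℚ[X] := -(Polynomial.C K * q) + Polynomial.X^d with hs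
  have hdlt : (Polynomial.C K * q).degree < (Polynomial.X^d : ℚ[X]).degree := by
    have h1 : (Polynomial.C K * q).degree ≤ q.degree := by
      refine le_trans (degree_mul_le _ _) ?_
      calc (Polynomial.C K).degree + q.degree ≤ 0 + q.degree :=
            add_le_add_left degree_C_le _
        _ = q.degree := zero_add _
    apply lt_of_le_of_lt h1
    rw [degree_X_pow]
    rcases eq_or_ne q 0 with rfl | hq0
    · simp only [degree_zero]
      exact WithBot.bot_lt_coe _
    · rw [degree_eq_natDegree hq0]
      exact_mod_cast hq
  have hsl : s.leadingCoeff = 1 := by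
    rw [hs, leadingCoeff_add_of_degree_lt (by rwa [degree_neg]), leadingCoeff_X_pow]
  have hsd : s.degree = d := by
    rw [hs, degree_add_eq_right_of_degree_lt (by rwa [degree_neg]), degree_X_pow]
  have := eventually_pos s (by rw [hsd]; exact_mod_cast hd) (by rw [hsl]; norm_num)
  obtain ⟨n, hn₀, hn⟩ := ((eventually_ge_atTop n₀).and this).exists
  rw [hs] at hn
  simp only [Polynomial.eval_add, Polynomial.eval_neg, Polynomial.eval_mul,
    Polynomial.eval_C, Polynomial.eval_pow, Polynomial.eval_X] at hn
  exact absurd (h n hn₀) (by linarith)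


end Analytic

section MvGlue
set_option linter.unusedSectionVars false
variable {σ : Type*} [Fintype σ]

lemma aeval_linear_eval (f : MvPolynomial σ ℚ) (a : σ → ℚ) (x : ℚ) :
    Polynomial.eval x (MvPolynomial.aeval (fun i => Polynomial.C (a i) * Polynomial.X) f) =
      MvPolynomial.eval (fun i => a i * x) f := by
  induction f using MvPolynomial.induction_on with
  | C c => simp [MvPolynomial.algebraMap_eq]
  | add p q hp hq => simp [hp, hq]
  | mul_X p i hp => simp [hp]

lemma degree_eq_sum_univ (α : σ →₀ ℕ) : Finsupp.degree α = ∑ i, α i := by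
  rw [Finsupp.degree]
  apply Finset.sum_subset (Finset.subset_univ _)
  intro i _ hi
  exact Finsupp.notMem_support_iff.1 hi

lemma coeff_aeval_linear (f : MvPolynomial σ ℚ) (a : σ → ℚ) (n : ℕ) :
    Polynomial.coeff (MvPolynomial.aeval (fun i => Polynomial.C (a i) * Polynomial.X) f) n =
      MvPolynomial.eval (fun i => a i) (MvPolynomial.homogeneousComponent n f) := by
  rw [MvPolynomial.aeval_def, MvPolynomial.eval₂_eq]
  rw [MvPolynomial.homogeneousComponent_apply, map_sum]
  rw [Polynomial.finset_sum_coeff]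
  rw [Finset.sum_filter]
  apply Finset.sum_congr rfl
  intro α hα
  have hprodext : ∏ i ∈ α.support, (Polynomial.C (a i) * Polynomial.X) ^ α i =
      ∏ i, (Polynomial.C (a i) * Polynomial.X) ^ α i := by
    apply Finset.prod_subset (Finset.subset_univ _)
    intro i _ hi
    rw [Finsupp.notMem_support_iff.1 hi, pow_zero]
  rw [hprodext]
  have hterm : (algebraMap ℚ (Polynomial ℚ)) (MvPolynomial.coeff α f) *
      ∏ i, (Polynomial.C (a i) * Polynomial.X) ^ α i =
      Polynomial.C (MvPolynomial.coeff α f * ∏ i, (a i) ^ α i) * Polynomial.X ^ (∑ i, α i) := by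
    simp only [mul_pow, ← Polynomial.C_pow]
    rw [Finset.prod_mul_distrib, Finset.prod_pow_eq_pow_sum]
    rw [← map_prod (Polynomial.C : ℚ →+* Polynomial ℚ)]
    rw [Polynomial.algebraMap_eq, ← mul_assoc, ← Polynomial.C_mul]
  rw [hterm, Polynomial.coeff_C_mul, Polynomial.coeff_X_pow]
  rw [MvPolynomial.eval_monomial, Finsupp.prod_pow, degree_eq_sum_univ]
  by_cases h : (∑ i, α i) = n
  · simp [h]
  · simp only [h, if_false]
    rw [if_neg (by omega)]
    simp

lemma natDegree_aeval_le (f : MvPolynomial σ ℚ) (a : σ → ℚ) :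
    Polynomial.natDegree (MvPolynomial.aeval (fun i => Polynomial.C (a i) * Polynomial.X) f) ≤
      f.totalDegree := by
  rw [MvPolynomial.aeval_def, MvPolynomial.eval₂_eq]
  apply Polynomial.natDegree_sum_le_of_forall_le
  intro α hα
  refine le_trans (Polynomial.natDegree_mul_le) ?_
  have h1 : Polynomial.natDegree ((algebraMap ℚ (Polynomial ℚ)) (MvPolynomial.coeff α f)) = 0 := by
    rw [Polynomial.algebraMap_eq]; exact Polynomial.natDegree_C _
  rw [h1, zero_add]
  refine le_trans (Polynomial.natDegree_prod_le _ _) ?_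
  have h2 : ∀ i : σ, Polynomial.natDegree ((Polynomial.C (a i) * Polynomial.X) ^ α i) ≤ α i := by
    intro i
    refine le_trans (Polynomial.natDegree_pow_le) ?_
    have : (Polynomial.C (a i) * Polynomial.X).natDegree ≤ 1 := by
      refine le_trans Polynomial.natDegree_mul_le ?_
      simp
    nlinarith
  refine le_trans (Finset.sum_le_sum fun i (_ : i ∈ α.support) => h2 i) ?_
  exact MvPolynomial.le_totalDegree hα

lemma homComp_totalDegree_ne_zero (f : MvPolynomial σ ℚ) (hf : f ≠ 0) :
    MvPolynomial.homogeneousComponent f.totalDegree f ≠ 0 := by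
  obtain ⟨α, hα, hsup⟩ := Finset.exists_mem_eq_sup f.support
    (MvPolynomial.support_nonempty.2 hf) (fun s => s.sum fun _ e => e)
  intro h0
  have hc := MvPolynomial.coeff_homogeneousComponent (φ := f) f.totalDegree α
  rw [h0] at hc
  have hdeg : Finsupp.degree α = f.totalDegree := by
    rw [MvPolynomial.totalDegree, hsup]
    rfl
  rw [if_pos hdeg] at hc
  exact (MvPolynomial.mem_support_iff.1 hα) hc.symm

end MvGlue

theorem lplus_upper (m₀ : ℕ) (r0 : Fin m₀ → Fin m₀ → Prop)
    (hr0 : IsPartialOrder (Fin m₀) r0) (S : Finset (Fin m₀))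
    (hS : IsChain r0 (↑S : Set (Fin m₀))) (m : Fin m₀ → ℕ) (v : {i : Fin m₀ // i ∈ S} → ℕ) :
    Lplus m₀ r0 (fun i => if h : i ∈ S then v ⟨i, h⟩ else m i) ≤
      ((∑ i, m i + 1) ^ (∑ i ∈ univ.filter
          (fun i : Fin m₀ => i ∉ S ∧ ∃ j ∈ S, ¬ r0 i j ∧ ¬ r0 j i), m i)
        * (∑ i, m i + 1) ^ (∑ i, m i))
        * (1 + ∑ j, v j) ^ (∑ i ∈ univ.filter
          (fun i : Fin m₀ => i ∉ S ∧ ∃ j ∈ S, ¬ r0 i j ∧ ¬ r0 j i), m i) := by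
  classical
  set T : Finset (Fin m₀) :=
    univ.filter (fun i : Fin m₀ => i ∉ S ∧ ∃ j ∈ S, ¬ r0 i j ∧ ¬ r0 j i) with hT
  set mv : Fin m₀ → ℕ := fun i => if h : i ∈ S then v ⟨i, h⟩ else m i with hmv
  set N : ℕ := ∑ i, mv i with hN
  set d : ℕ := ∑ i ∈ T, m i with hd
  set Mt : ℕ := ∑ i, m i with hMt
  -- basic facts about T
  have hTnotS : ∀ i ∈ T, i ∉ S := fun i hi => ((mem_filter.1 hi).2).1
  have hmvT : ∀ i ∈ T, mv i = m i := by
    intro i hi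
    simp only [hmv, dif_neg (hTnotS i hi)]
  -- comparability of indices outside T with S-indices
  have hcompIdx : ∀ i j : Fin m₀, i ≠ j → (i ∈ S ∨ (i ∉ S ∧ i ∉ T)) →
      (j ∈ S ∨ (j ∉ S ∧ j ∉ T)) → (i ∈ S ∨ j ∈ S) → r0 i j ∨ r0 j i := by
    intro i j hne hi hj hij
    have comp : ∀ a b : Fin m₀, a ∈ S → b ∉ S → b ∉ T → r0 a b ∨ r0 b a := by
      intro a b haS hbS hbT
      rw [hT, mem_filter] at hbT
      push_neg at hbT
      have := hbT (mem_univ b)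
      rcases (by tauto : ∀ k ∈ S, r0 b k ∨ r0 k b) a haS with h | h
      · exact Or.inr h
      · exact Or.inl h
    rcases hi with hiS | ⟨hiS, hiT⟩
    · rcases hj with hjS | ⟨hjS, hjT⟩
      · exact hS hiS hjS hne
      · exact comp i j hiS hjS hjT
    · rcases hj with hjS | ⟨hjS, hjT⟩
      · exact (comp j i hjS hiS hiT).symm
      · exact absurd (hij.resolve_left hiS) hjS
  -- the encoding
  set X := LexSumChains m₀ mv with hX
  let B := {x : X // x.1 ∈ T}
  let D := {x : X // x.1 ∉ S ∧ x.1 ∉ T}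
  let enc : {φ : X ≃ Fin (∑ i, mv i) // IsLin r0 mv φ} →
      (B → Fin (∑ i, mv i)) × (D → Fin (Fintype.card D)) :=
    fun φ => (fun b => φ.1 b.1, fun z => ⟨rk (fun w : D => φ.1 w.1) z,
      rk_lt_card _ _⟩)
  have hinj : Function.Injective enc := by
    rintro ⟨φ, hφ⟩ ⟨ψ, hψ⟩ heq
    simp only [enc, Prod.mk.injEq] at heq
    obtain ⟨h1, h2⟩ := heq
    have h1' : ∀ b : B, φ b.1 = ψ b.1 := fun b => congrFun h1 b
    have h2' : ∀ z : D, rk (fun w : D => φ w.1) z = rk (fun w : D => ψ w.1) z := by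
      intro z
      have := congrFun h2 z
      exact congrArg Fin.val this
    -- the permutation
    set ρ : Equiv.Perm (Fin (∑ i, mv i)) := φ.symm.trans ψ with hρ
    set P : Finset (Fin (∑ i, mv i)) :=
      univ.filter (fun a => (φ.symm a).1 ∉ T) with hP
    have hfix : ∀ a, a ∉ P → ρ a = a := by
      intro a ha
      rw [hP, mem_filter] at ha
      push_neg at ha
      have haT : (φ.symm a).1 ∈ T := ha (mem_univ a)
      have := h1' ⟨φ.symm a, haT⟩
      simp only at this
      rw [hρ]
      simp only [Equiv.trans_apply]
      rw [← this, Equiv.apply_symm_apply]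
    have hmono : ∀ a ∈ P, ∀ b ∈ P, a < b → ρ a < ρ b := by
      intro a ha b hb hab
      rw [hP, mem_filter] at ha hb
      set x : X := φ.symm a with hx
      set y : X := φ.symm b with hy
      have hxT : x.1 ∉ T := ha.2
      have hyT : y.1 ∉ T := hb.2
      have hφxy : φ x < φ y := by
        rw [hx, hy]; simpa [Equiv.apply_symm_apply] using hab
      have hxyne : x ≠ y := by
        intro h; rw [h] at hφxy; exact lt_irrefl _ hφxy
      show ψ x < ψ y
      have hgen : x.1 ∈ S ∨ y.1 ∈ S → ψ x < ψ y := by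
        intro hor
        have hx' : x.1 ∈ S ∨ (x.1 ∉ S ∧ x.1 ∉ T) := by
          by_cases h : x.1 ∈ S
          · exact Or.inl h
          · exact Or.inr ⟨h, hxT⟩
        have hy' : y.1 ∈ S ∨ (y.1 ∉ S ∧ y.1 ∉ T) := by
          by_cases h : y.1 ∈ S
          · exact Or.inl h
          · exact Or.inr ⟨h, hyT⟩
        have hcompa : lexRel r0 mv x y ∨ lexRel r0 mv y x := by
          by_cases hxy1 : x.1 = y.1
          · rcases le_total (x.2 : ℕ) (y.2 : ℕ) with h | h
            · exact Or.inl (Or.inl ⟨hxy1, h⟩)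
            · exact Or.inr (Or.inl ⟨hxy1.symm, h⟩)
          · rcases hcompIdx x.1 y.1 hxy1 hx' hy' hor with h | h
            · exact Or.inl (Or.inr ⟨hxy1, h⟩)
            · exact Or.inr (Or.inr ⟨Ne.symm hxy1, h⟩)
        rcases hcompa with h | h
        · rcases lt_or_eq_of_le (hψ x y h) with h' | h'
          · exact h'
          · exact absurd (ψ.injective h') hxyne
        · exact absurd (hφ y x h) (not_le_of_gt hφxy)
      by_cases hxS : x.1 ∈ S
      case neg =>
        by_cases hyS : y.1 ∈ S
        case pos =>
          exact hgen (Or.inr hyS)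
        case neg =>
          -- both in D : rank argument
          have hxD : x.1 ∉ S ∧ x.1 ∉ T := ⟨hxS, hxT⟩
          have hyD : y.1 ∉ S ∧ y.1 ∉ T := ⟨hyS, hyT⟩
          have hφinj : Function.Injective (fun w : D => φ w.1) := by
            intro w1 w2 h
            exact Subtype.ext (φ.injective h)
          have hψinj : Function.Injective (fun w : D => ψ w.1) := by
            intro w1 w2 h
            exact Subtype.ext (ψ.injective h)
          have hr1 : rk (fun w : D => φ w.1) ⟨x, hxD⟩ < rk (fun w : D => φ w.1) ⟨y, hyD⟩ :=
            rk_lt_rk hφxy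
          rw [h2' ⟨x, hxD⟩, h2' ⟨y, hyD⟩] at hr1
          exact (rk_lt_iff hψinj).1 hr1
      case pos =>
        exact hgen (Or.inl hxS)
    have hid := perm_fix ρ P hfix hmono
    have : φ = ψ := by
      apply Equiv.ext
      intro x
      have := hid (φ x)
      rw [hρ] at this
      simpa [Equiv.trans_apply, Equiv.symm_apply_apply] using this.symm
    exact Subtype.ext this
  -- cardinality count
  have hcount := Fintype.card_le_of_injective enc hinj
  have hLp : Lplus m₀ r0 mv = Fintype.card {φ : X ≃ Fin (∑ i, mv i) // IsLin r0 mv φ} := by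
    rw [Lplus, Nat.card_eq_fintype_card]
  have hcardcod : Fintype.card ((B → Fin (∑ i, mv i)) × (D → Fin (Fintype.card D))) =
      (∑ i, mv i) ^ (Fintype.card B) * (Fintype.card D) ^ (Fintype.card D) := by
    rw [Fintype.card_prod, Fintype.card_fun, Fintype.card_fun, Fintype.card_fin,
      Fintype.card_fin]
  -- card B = d
  have hcardB : Fintype.card B = d := by
    have e1 : B ≃ Σ i : {i : Fin m₀ // i ∈ T}, Fin (mv i.1) :=
      Equiv.subtypeSigmaEquiv (fun i : Fin m₀ => Fin (mv i)) (fun i => i ∈ T)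
    rw [Fintype.card_congr e1, Fintype.card_sigma]
    have e2 : ∑ i : {i : Fin m₀ // i ∈ T}, Fintype.card (Fin (mv i.1)) =
        ∑ i ∈ T, mv i := by
      simp only [Fintype.card_fin]
      exact Finset.sum_coe_sort T mv
    rw [e2, hd]
    exact Finset.sum_congr rfl hmvT
  -- card D ≤ Mt
  have hcardD : Fintype.card D ≤ Mt := by
    have e1 : D ≃ Σ i : {i : Fin m₀ // i ∉ S ∧ i ∉ T}, Fin (mv i.1) :=
      Equiv.subtypeSigmaEquiv (fun i : Fin m₀ => Fin (mv i)) (fun i => i ∉ S ∧ i ∉ T)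
    rw [Fintype.card_congr e1, Fintype.card_sigma]
    simp only [Fintype.card_fin]
    have e2 : ∑ i : {i : Fin m₀ // i ∉ S ∧ i ∉ T}, mv i.1 =
        ∑ i : {i : Fin m₀ // i ∉ S ∧ i ∉ T}, m i.1 := by
      apply Finset.sum_congr rfl
      intro i _
      simp only [hmv, dif_neg i.2.1]
    rw [e2]
    have e3 : ∑ i : {i : Fin m₀ // i ∉ S ∧ i ∉ T}, m i.1 =
        ∑ y ∈ univ.map (Function.Embedding.subtype (fun i : Fin m₀ => i ∉ S ∧ i ∉ T)), m y := by
      rw [Finset.sum_map]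
      rfl
    rw [e3, hMt]
    exact Finset.sum_le_sum_of_subset (Finset.subset_univ _)
  -- bound N
  have hNle : (∑ i, mv i) ≤ (1 + ∑ j, v j) * (Mt + 1) := by
    have hsplit : (∑ i, mv i) =
        ∑ i ∈ S, mv i + ∑ i ∈ univ.filter (fun i => i ∉ S), mv i := by
      rw [← Finset.sum_filter_add_sum_filter_not univ (fun i => i ∈ S) mv]
      congr 1
      congr 1
      ext i
      simp
    have hvS : ∑ i ∈ S, mv i = ∑ j, v j := by
      rw [Finset.sum_subtype S (fun x => Iff.rfl) mv]
      apply Finset.sum_congr rfl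
      intro j _
      simp only [hmv, dif_pos j.2]
    have hrest : ∑ i ∈ univ.filter (fun i => i ∉ S), mv i ≤ Mt := by
      have : ∀ i ∈ univ.filter (fun i : Fin m₀ => i ∉ S), mv i = m i := by
        intro i hi
        simp only [mem_filter] at hi
        simp only [hmv, dif_neg hi.2]
      rw [Finset.sum_congr rfl this, hMt]
      exact Finset.sum_le_sum_of_subset (Finset.filter_subset _ _)
    rw [hsplit, hvS]
    have h2 : ∑ i ∈ univ.filter (fun i => i ∉ S), mv i ≤ Mt := hrest
    set R := ∑ i ∈ univ.filter (fun i : Fin m₀ => i ∉ S), mv i with hR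
    set V := ∑ j : {i : Fin m₀ // i ∈ S}, v j with hV
    calc V + R ≤ V + Mt := by omega
      _ ≤ (1 + V) * (Mt + 1) := by nlinarith
  -- final computation
  rw [hLp] at *
  calc Fintype.card {φ : X ≃ Fin (∑ i, mv i) // IsLin r0 mv φ}
      ≤ (∑ i, mv i) ^ (Fintype.card B) * (Fintype.card D) ^ (Fintype.card D) := by
        rw [← hcardcod]; exact hcount
    _ ≤ ((1 + ∑ j, v j) * (Mt + 1)) ^ d * (Mt + 1) ^ Mt := by
        apply Nat.mul_le_mul
        · rw [hcardB]
          exact Nat.pow_le_pow_left hNle d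
        · calc (Fintype.card D) ^ (Fintype.card D) ≤ (Mt + 1) ^ (Fintype.card D) :=
              Nat.pow_le_pow_left (by omega) _
            _ ≤ (Mt + 1) ^ Mt := Nat.pow_le_pow_right (by omega) hcardD
    _ = ((Mt + 1) ^ d * (Mt + 1) ^ Mt) * (1 + ∑ j, v j) ^ d := by
        rw [mul_pow]; ring


lemma chain_max {α : Type*} (r : α → α → Prop)
    (htrans : ∀ a b c, r a b → r b c → r a c) (hrefl : ∀ a, r a a) (W : Finset α)
    (hW : W.Nonempty)
    (hchain : ∀ a ∈ W, ∀ b ∈ W, a ≠ b → r a b ∨ r b a) :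
    ∃ j ∈ W, ∀ b ∈ W, r b j := by
  classical
  induction W using Finset.induction_on with
  | empty => exact absurd hW (by simp)
  | @insert a s ha ih =>
    rcases s.eq_empty_or_nonempty with rfl | hsne
    · refine ⟨a, mem_insert_self a _, ?_⟩
      intro b hb
      rcases mem_insert.1 hb with rfl | hb
      · exact hrefl b
      · simp at hb
    · obtain ⟨j, hjs, hjmax⟩ := ih hsne (fun x hx y hy hxy =>
        hchain x (mem_insert_of_mem hx) y (mem_insert_of_mem hy) hxy)
      have hane : a ≠ j := fun h => ha (h ▸ hjs)
      rcases hchain a (mem_insert_self a s) j (mem_insert_of_mem hjs) hane with h | h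
      · refine ⟨j, mem_insert_of_mem hjs, ?_⟩
        intro b hb
        rcases mem_insert.1 hb with rfl | hb
        · exact h
        · exact hjmax b hb
      · refine ⟨a, mem_insert_self a s, ?_⟩
        intro b hb
        rcases mem_insert.1 hb with rfl | hb
        · exact hrefl b
        · exact htrans _ _ _ (hjmax b hb) h

def RWrap (m₀ : ℕ) (r0 : Fin m₀ → Fin m₀ → Prop) : Type := Fin m₀

lemma sigma_ext {m₀ : ℕ} {mv : Fin m₀ → ℕ} {x y : LexSumChains m₀ mv}
    (h1 : x.1 = y.1) (h2 : (x.2 : ℕ) = (y.2 : ℕ)) : x = y := by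
  obtain ⟨i, t⟩ := x
  obtain ⟨j, s⟩ := y
  simp only at h1
  subst h1
  simp only [Sigma.mk.inj_iff, heq_eq_eq, true_and]
  exact Fin.ext h2

theorem lplus_lower (m₀ : ℕ) (r0 : Fin m₀ → Fin m₀ → Prop)
    (hr0 : IsPartialOrder (Fin m₀) r0) (S : Finset (Fin m₀))
    (hS : IsChain r0 (↑S : Set (Fin m₀))) (m : Fin m₀ → ℕ) (N : ℕ)
    (hdpos : 0 < ∑ i ∈ univ.filter
          (fun i : Fin m₀ => i ∉ S ∧ ∃ j ∈ S, ¬ r0 i j ∧ ¬ r0 j i), m i)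
    (hdN : (∑ i ∈ univ.filter
          (fun i : Fin m₀ => i ∉ S ∧ ∃ j ∈ S, ¬ r0 i j ∧ ¬ r0 j i), m i) ≤ N) :
    (N / (∑ i ∈ univ.filter
          (fun i : Fin m₀ => i ∉ S ∧ ∃ j ∈ S, ¬ r0 i j ∧ ¬ r0 j i), m i)) ^
      (∑ i ∈ univ.filter
          (fun i : Fin m₀ => i ∉ S ∧ ∃ j ∈ S, ¬ r0 i j ∧ ¬ r0 j i), m i) ≤
      Lplus m₀ r0 (fun i => if h : i ∈ S then N else m i) := by
  classical
  have hrefl : ∀ a, r0 a a := fun a => hr0.toIsPreorder.toRefl.refl a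
  have htrans : ∀ a b c, r0 a b → r0 b c → r0 a c := fun a b c => hr0.toIsPreorder.toIsTrans.trans a b c
  have hanti : ∀ a b, r0 a b → r0 b a → a = b := fun a b => hr0.toAntisymm.antisymm a b
  set T : Finset (Fin m₀) :=
    univ.filter (fun i : Fin m₀ => i ∉ S ∧ ∃ j ∈ S, ¬ r0 i j ∧ ¬ r0 j i) with hT
  set d : ℕ := ∑ i ∈ T, m i with hd
  set Mt : ℕ := ∑ i, m i with hMt
  set mv : Fin m₀ → ℕ := fun i => if h : i ∈ S then N else m i with hmv
  set X := LexSumChains m₀ mv with hX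
  set w : ℕ := N / d with hw
  have hTnotS : ∀ i ∈ T, i ∉ S := fun i hi => ((mem_filter.1 hi).2).1
  have hmvS : ∀ i ∈ S, mv i = N := fun i hi => by simp only [hmv, dif_pos hi]
  have hmvnS : ∀ i, i ∉ S → mv i = m i := fun i hi => by simp only [hmv, dif_neg hi]
  have hmle : ∀ i, m i ≤ Mt := fun i =>
    Finset.single_le_sum (f := m) (fun i _ => Nat.zero_le _) (mem_univ i)
  have hwpos : 0 < w := by
    rw [hw]
    exact Nat.one_le_div_iff hdpos |>.2 hdN
  have hdw : d * w ≤ N := by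
    rw [hw, mul_comm]
    exact Nat.div_mul_le_self N d
  -- comparability of non-T indices with S
  have hcompS : ∀ b, b ∉ S → b ∉ T → ∀ j ∈ S, r0 b j ∨ r0 j b := by
    intro b hbS hbT j hj
    rw [hT, mem_filter] at hbT
    push_neg at hbT
    have := hbT (mem_univ b)
    rcases (by tauto : ∀ k ∈ S, r0 b k ∨ r0 k b) j hj with h | h
    · exact Or.inl h
    · exact Or.inr h
  -- the order embedding ℓ (topological sort)
  letI PO : PartialOrder (RWrap m₀ r0) :=
    { le := r0, lt := fun a b => r0 a b ∧ ¬ r0 b a,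
      le_refl := hrefl, le_trans := htrans, le_antisymm := hanti,
      lt_iff_le_not_ge := fun _ _ => Iff.rfl }
  letI : Fintype (RWrap m₀ r0) := (inferInstance : Fintype (Fin m₀))
  have hκ0inj : Function.Injective
      (fun i : RWrap m₀ r0 => (toLinearExtension i : LinearExtension (RWrap m₀ r0))) :=
    fun a b h => h
  set ℓ : Fin m₀ → ℕ :=
    fun i => rk (fun i : RWrap m₀ r0 => (toLinearExtension i : LinearExtension (RWrap m₀ r0)))
      (show RWrap m₀ r0 from i) with hℓ
  have hℓmono : ∀ i j, r0 i j → i ≠ j → ℓ i < ℓ j := by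
    intro i j hij hne
    apply rk_lt_rk
    have h1 : (toLinearExtension (show RWrap m₀ r0 from i) : LinearExtension (RWrap m₀ r0)) ≤
        toLinearExtension (show RWrap m₀ r0 from j) :=
      toLinearExtension.monotone hij
    exact lt_of_le_of_ne h1 (fun h => hne (hκ0inj h))
  have hℓinj : Function.Injective ℓ := by
    intro a b h
    exact hκ0inj (rk_injective hκ0inj h)
  -- maximal witness function J
  have hJex : ∀ i : Fin m₀, ∃ j : Fin m₀, i ∈ T →
      (j ∈ S ∧ (¬ r0 i j ∧ ¬ r0 j i) ∧ ∀ b ∈ S, (¬ r0 i b ∧ ¬ r0 b i) → r0 b j) := by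
    intro i
    by_cases hi : i ∈ T
    · rw [hT, mem_filter] at hi
      obtain ⟨-, hiS, j0, hj0S, hj0⟩ := hi
      set W : Finset (Fin m₀) := S.filter (fun j => ¬ r0 i j ∧ ¬ r0 j i) with hW
      have hWne : W.Nonempty := ⟨j0, mem_filter.2 ⟨hj0S, hj0⟩⟩
      have hWchain : ∀ a ∈ W, ∀ b ∈ W, a ≠ b → r0 a b ∨ r0 b a := by
        intro a haW b hbW hab
        exact hS (mem_filter.1 haW).1 (mem_filter.1 hbW).1 hab
      obtain ⟨j, hjW, hjmax⟩ := chain_max r0 htrans hrefl W hWne hWchain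
      have hjS : j ∈ S := (mem_filter.1 hjW).1
      refine ⟨j, fun _ => ⟨hjS, (mem_filter.1 hjW).2, ?_⟩⟩
      intro b hbS hb
      exact hjmax b (mem_filter.2 ⟨hbS, hb⟩)
    · exact ⟨i, fun h => absurd h hi⟩
  choose J hJ using hJex
  have hJS : ∀ i ∈ T, J i ∈ S := fun i hi => (hJ i hi).1
  have hJinc : ∀ i ∈ T, ¬ r0 i (J i) ∧ ¬ r0 (J i) i := fun i hi => (hJ i hi).2.1
  have hJmax : ∀ i ∈ T, ∀ b ∈ S, (¬ r0 i b ∧ ¬ r0 b i) → r0 b (J i) :=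
    fun i hi => (hJ i hi).2.2
  have hJnotT : ∀ i ∈ T, J i ∉ T := fun i hi h => hTnotS _ h (hJS i hi)
  -- monotonicity lemmas
  have M1 : ∀ i ∈ T, ∀ k, k ∉ T → r0 k i → k ≠ i → (r0 k (J i) ∧ k ≠ J i) := by
    intro i hi k hkT hki hkne
    have hkJ : k ≠ J i := by
      rintro rfl
      exact (hJinc i hi).2 hki
    refine ⟨?_, hkJ⟩
    by_cases hkS : k ∈ S
    · rcases hS hkS (hJS i hi) hkJ with h | h
      · exact h
      · exact absurd (htrans _ _ _ h hki) (hJinc i hi).2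
    · rcases hcompS k hkS hkT (J i) (hJS i hi) with h | h
      · exact h
      · exact absurd (htrans _ _ _ h hki) (hJinc i hi).2
  have M2 : ∀ i ∈ T, ∀ k, k ∉ T → r0 i k → i ≠ k → (r0 (J i) k ∧ J i ≠ k) := by
    intro i hi k hkT hik hkne
    have hkJ : J i ≠ k := by
      rintro rfl
      exact (hJinc i hi).1 hik
    refine ⟨?_, hkJ⟩
    by_cases hkS : k ∈ S
    · rcases hS (hJS i hi) hkS hkJ with h | h
      · exact h
      · exact absurd (htrans _ _ _ hik h) (hJinc i hi).1
    · rcases hcompS k hkS hkT (J i) (hJS i hi) with h | h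
      · exact absurd (htrans _ _ _ hik h) (hJinc i hi).1
      · exact h
  have M3 : ∀ i ∈ T, ∀ i', i' ∈ T → r0 i i' → i ≠ i' → r0 (J i) (J i') := by
    intro i hi i' hi' hii' hne
    rcases eq_or_ne (J i) (J i') with h | hJne
    · rw [h]; exact hrefl _
    · by_cases h1 : r0 (J i) i'
      · -- then J i' must be above J i or contradiction
        rcases hS (hJS i hi) (hJS i' hi') hJne with h | h
        · exact h
        · exact absurd (htrans _ _ _ h h1) (hJinc i' hi').2
      · by_cases h2 : r0 i' (J i)
        · exact absurd (htrans _ _ _ hii' h2) (hJinc i hi).1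
        · -- J i incomparable with i', so by maximality r0 (J i) (J i')
          exact hJmax i' hi' (J i) (hJS i hi) ⟨fun h => h2 h, fun h => h1 h⟩
  -- the B subtype and its rank equiv
  set B := {x : X // x.1 ∈ T} with hB
  have hmvT : ∀ i ∈ T, mv i = m i := fun i hi => hmvnS i (hTnotS i hi)
  have hcardB : Fintype.card B = d := by
    have e1 : B ≃ Σ i : {i : Fin m₀ // i ∈ T}, Fin (mv i.1) :=
      Equiv.subtypeSigmaEquiv (fun i : Fin m₀ => Fin (mv i)) (fun i => i ∈ T)
    rw [Fintype.card_congr e1, Fintype.card_sigma]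
    have e2 : ∑ i : {i : Fin m₀ // i ∈ T}, Fintype.card (Fin (mv i.1)) = ∑ i ∈ T, mv i := by
      simp only [Fintype.card_fin]
      exact Finset.sum_coe_sort T mv
    rw [e2, hd]
    exact Finset.sum_congr rfl hmvT
  set keyb : B → ℕ := fun b => ℓ b.1.1 * (Mt + 1) + (b.1.2 : ℕ) with hkeyb
  have hinnerb : ∀ b : B, (b.1.2 : ℕ) < Mt + 1 := by
    intro b
    have h1 : (b.1.2 : ℕ) < mv b.1.1 := b.1.2.2
    have h2 := hmvT _ b.2
    have := hmle b.1.1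
    omega
  have hkeybinj : Function.Injective keyb := by
    intro b b' h
    simp only [hkeyb] at h
    have h1 : ℓ b.1.1 = ℓ b'.1.1 := by
      rcases lt_trichotomy (ℓ b.1.1) (ℓ b'.1.1) with h2 | h2 | h2
      · exact absurd h (Nat.ne_of_lt (base2_lt (hinnerb b) h2))
      · exact h2
      · exact absurd h.symm (Nat.ne_of_lt (base2_lt (hinnerb b') h2))
    have h2 : b.1.1 = b'.1.1 := hℓinj h1
    rw [h1] at h
    apply Subtype.ext
    apply sigma_ext h2
    omega
  set eB : B ≃ Fin (Fintype.card B) := rkEquiv keyb hkeybinj with heB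
  have heBlt : ∀ b : B, (eB b : ℕ) < d := by
    intro b
    have := (eB b).2
    omega
  have hkeyb_mono : ∀ b b' : B, keyb b < keyb b' → (eB b : ℕ) < (eB b' : ℕ) := by
    intro b b' h
    have := (rkEquiv_lt_iff hkeybinj (x := b) (y := b')).2 h
    exact this
  -- the parameterized position function
  set pf : (B → Fin w) → B → ℕ := fun c b => (eB b : ℕ) * w + (c b : ℕ) with hpf
  have hpflt : ∀ c b, pf c b < N := by
    intro c b
    have h1 : (eB b : ℕ) ≤ d - 1 := by have := heBlt b; omega
    have h2 : (c b : ℕ) < w := (c b).2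
    have h3 : (eB b : ℕ) * w + (c b : ℕ) < ((eB b : ℕ) + 1) * w := by nlinarith
    have h4 : ((eB b : ℕ) + 1) * w ≤ d * w := by
      apply Nat.mul_le_mul_right
      have := heBlt b
      omega
    simp only [hpf]
    omega
  have hpfmono : ∀ c (b b' : B), (eB b : ℕ) < (eB b' : ℕ) → pf c b < pf c b' := by
    intro c b b' h
    simp only [hpf]
    have h2 : (c b : ℕ) < w := (c b).2
    nlinarith
  -- key functions
  set key1 : X → ℕ := fun x => if x.1 ∈ T then ℓ (J x.1) else ℓ x.1 with hkey1
  set key2 : (B → Fin w) → X → ℕ :=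
    fun c x => if hx : x.1 ∈ T then pf c ⟨x, hx⟩ else (x.2 : ℕ) with hkey2
  set key3 : X → ℕ := fun x => if hx : x.1 ∈ T then 1 + (eB ⟨x, hx⟩ : ℕ) else 0 with hkey3
  set B2 : ℕ := N + Mt + 1 with hB2
  set B3 : ℕ := d + 2 with hB3
  have hkey2lt : ∀ c x, key2 c x < B2 := by
    intro c x
    simp only [hkey2]
    split
    · have := hpflt c ⟨x, ‹_›⟩; omega
    · have h1 : (x.2 : ℕ) < mv x.1 := x.2.2
      have h2 : mv x.1 ≤ N + Mt := by
        by_cases hx : x.1 ∈ S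
        · rw [hmvS _ hx]; omega
        · rw [hmvnS _ hx]; have := hmle x.1; omega
      omega
  have hkey3lt : ∀ x, key3 x < B3 := by
    intro x
    simp only [hkey3]
    split
    · have := heBlt ⟨x, ‹_›⟩; omega
    · omega
  set κf : (B → Fin w) → X → ℕ :=
    fun c x => (key1 x * B2 + key2 c x) * B3 + key3 x with hκf
  -- monotonicity of κ
  have hκmono : ∀ c (x y : X), lexRel r0 mv x y → κf c x ≤ κf c y := by
    intro c x y hxy
    rcases hxy with ⟨hfst, hsnd⟩ | ⟨hne, hr⟩
    · rcases Nat.lt_or_ge (x.2 : ℕ) (y.2 : ℕ) with hlt | hge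
      · have hk1 : key1 x = key1 y := by simp only [hkey1]; rw [hfst]
        by_cases hx : x.1 ∈ T
        · have hy : y.1 ∈ T := by rwa [hfst] at hx
          have hkb : keyb ⟨x, hx⟩ < keyb ⟨y, hy⟩ := by
            simp only [hkeyb]
            have hℓeq : ℓ x.1 = ℓ y.1 := by rw [hfst]
            rw [hℓeq]
            omega
          have hp := hpfmono c _ _ (hkeyb_mono _ _ hkb)
          have hk2 : key2 c x < key2 c y := by
            simp only [hkey2, dif_pos hx, dif_pos hy]
            exact hp
          apply le_of_lt
          simp only [hκf]
          rw [hk1]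
          exact base_lt₂ (hkey3lt x) hk2
        · have hy : y.1 ∉ T := by rwa [hfst] at hx
          have hk2 : key2 c x < key2 c y := by
            simp only [hkey2, dif_neg hx, dif_neg hy]
            exact hlt
          apply le_of_lt
          simp only [hκf]
          rw [hk1]
          exact base_lt₂ (hkey3lt x) hk2
      · have hxy' : x = y := sigma_ext hfst (le_antisymm hsnd hge)
        rw [hxy']
    · apply le_of_lt
      by_cases hx : x.1 ∈ T <;> by_cases hy : y.1 ∈ T
      · rcases eq_or_ne (J x.1) (J y.1) with hJeq | hJne
        · have hk1 : key1 x = key1 y := by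
            simp only [hkey1, if_pos hx, if_pos hy]
            rw [hJeq]
          have hkb : keyb ⟨x, hx⟩ < keyb ⟨y, hy⟩ := by
            simp only [hkeyb]
            exact base2_lt (hinnerb ⟨x, hx⟩) (hℓmono _ _ hr hne)
          have hp := hpfmono c _ _ (hkeyb_mono _ _ hkb)
          have hk2 : key2 c x < key2 c y := by
            simp only [hkey2, dif_pos hx, dif_pos hy]
            exact hp
          simp only [hκf]
          rw [hk1]
          exact base_lt₂ (hkey3lt x) hk2
        · have h3 := M3 x.1 hx y.1 hy hr hne
          have hk1 : key1 x < key1 y := by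
            simp only [hkey1, if_pos hx, if_pos hy]
            exact hℓmono _ _ h3 hJne
          simp only [hκf]
          exact base_lt₁ (hkey2lt c x) (hkey3lt x) hk1
      · have h2 := M2 x.1 hx y.1 hy hr hne
        have hk1 : key1 x < key1 y := by
          simp only [hkey1, if_pos hx, if_neg hy]
          exact hℓmono _ _ h2.1 h2.2
        simp only [hκf]
        exact base_lt₁ (hkey2lt c x) (hkey3lt x) hk1
      · have h1 := M1 y.1 hy x.1 hx hr hne
        have hk1 : key1 x < key1 y := by
          simp only [hkey1, if_neg hx, if_pos hy]
          exact hℓmono _ _ h1.1 h1.2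
        simp only [hκf]
        exact base_lt₁ (hkey2lt c x) (hkey3lt x) hk1
      · have hk1 : key1 x < key1 y := by
          simp only [hkey1, if_neg hx, if_neg hy]
          exact hℓmono _ _ hr hne
        simp only [hκf]
        exact base_lt₁ (hkey2lt c x) (hkey3lt x) hk1
  -- injectivity of κ
  have hκinj : ∀ c, Function.Injective (κf c) := by
    intro c x y h
    simp only [hκf] at h
    obtain ⟨h1, h2, h3⟩ := base_inj (hkey2lt c x) (hkey2lt c y) (hkey3lt x) (hkey3lt y) h
    by_cases hx : x.1 ∈ T <;> by_cases hy : y.1 ∈ T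
    · simp only [hkey3, dif_pos hx, dif_pos hy] at h3
      have heq : eB ⟨x, hx⟩ = eB ⟨y, hy⟩ := Fin.ext (by omega)
      have := eB.injective heq
      exact congrArg Subtype.val this
    · simp only [hkey3, dif_pos hx, dif_neg hy] at h3
      omega
    · simp only [hkey3, dif_neg hx, dif_pos hy] at h3
      omega
    · simp only [hkey1, if_neg hx, if_neg hy] at h1
      simp only [hkey2, dif_neg hx, dif_neg hy] at h2
      exact sigma_ext (hℓinj h1) h2
  -- the linearization associated to a parameter
  have hcardX : Fintype.card X = ∑ i, mv i := by
    simp only [hX, LexSumChains]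
    simp
  have hΦlt : ∀ c (x y : X), κf c x < κf c y →
      rkEquiv' (κf c) (hκinj c) hcardX x < rkEquiv' (κf c) (hκinj c) hcardX y :=
    fun c x y h => (rkEquiv'_lt_iff (hκinj c) hcardX).2 h
  have hΦlin : ∀ c, IsLin r0 mv (rkEquiv' (κf c) (hκinj c) hcardX) :=
    fun c x y hxy => rkEquiv'_le (hκinj c) hcardX (hκmono c x y hxy)
  set G : (B → Fin w) → {φ : X ≃ Fin (∑ i, mv i) // IsLin r0 mv φ} :=
    fun c => ⟨rkEquiv' (κf c) (hκinj c) hcardX, hΦlin c⟩ with hG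
  have hGinj : Function.Injective G := by
    intro c c' h
    have hΦeq : rkEquiv' (κf c) (hκinj c) hcardX = rkEquiv' (κf c') (hκinj c') hcardX :=
      congrArg Subtype.val h
    by_contra hcc
    obtain ⟨b, hb⟩ := Function.ne_iff.1 hcc
    have hpb : pf c b ≠ pf c' b := by
      simp only [hpf]
      intro h'
      apply hb
      have hcb : (c b : ℕ) = (c' b : ℕ) := by omega
      exact Fin.ext hcb
    have key : ∀ c1 c2 : B → Fin w,
        rkEquiv' (κf c1) (hκinj c1) hcardX = rkEquiv' (κf c2) (hκinj c2) hcardX →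
        pf c1 b < pf c2 b → False := by
      intro c1 c2 hΦ12 hlt
      have hJb : J b.1.1 ∈ S := hJS _ b.2
      have hJbT : J b.1.1 ∉ T := hJnotT _ b.2
      have hsN : pf c2 b < mv (J b.1.1) := by
        rw [hmvS _ hJb]
        exact hpflt c2 b
      set xx : X := ⟨J b.1.1, ⟨pf c2 b, hsN⟩⟩ with hxx
      set yy : X := b.1 with hyy
      have hk1x : key1 xx = ℓ (J b.1.1) := by simp only [hkey1, hxx, if_neg (show J b.1.1 ∉ T from hJbT)]
      have hk1y : key1 yy = ℓ (J b.1.1) := by simp only [hkey1, hyy, if_pos b.2]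
      have hk2x : ∀ c0 : B → Fin w, key2 c0 xx = pf c2 b := by
        intro c0
        simp only [hkey2, hxx, dif_neg (show J b.1.1 ∉ T from hJbT)]
      have hk3x : key3 xx = 0 := by simp only [hkey3, hxx, dif_neg (show J b.1.1 ∉ T from hJbT)]
      have hk2y : ∀ c0 : B → Fin w, key2 c0 yy = pf c0 b := by
        intro c0
        simp only [hkey2, hyy, dif_pos b.2, Subtype.coe_eta]
      have hk3y : key3 yy = 1 + (eB b : ℕ) := by simp only [hkey3, hyy, dif_pos b.2, Subtype.coe_eta]
      have h3B : 1 + (eB b : ℕ) < B3 := by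
        have := heBlt b
        omega
      have hA : κf c1 yy < κf c1 xx := by
        simp only [hκf]
        rw [hk1x, hk1y, hk2x, hk2y, hk3x, hk3y]
        exact base_lt₂ h3B hlt
      have hBB : κf c2 xx < κf c2 yy := by
        simp only [hκf]
        rw [hk1x, hk1y, hk2x, hk2y, hk3x, hk3y]
        exact base_lt₃ (by omega)
      have hA' := hΦlt c1 _ _ hA
      have hB' := hΦlt c2 _ _ hBB
      rw [hΦ12] at hA'
      exact absurd hB' (not_lt_of_gt hA')
    rcases Nat.lt_or_ge (pf c b) (pf c' b) with h1 | h1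
    · exact key c c' hΦeq h1
    · have h1' : pf c' b < pf c b := by omega
      exact key c' c hΦeq.symm h1'
  calc w ^ d = Fintype.card (B → Fin w) := by
        rw [Fintype.card_fun, Fintype.card_fin, hcardB]
    _ ≤ Fintype.card {φ : X ≃ Fin (∑ i, mv i) // IsLin r0 mv φ} :=
        Fintype.card_le_of_injective G hGinj
    _ = Lplus m₀ r0 mv := by rw [Lplus, Nat.card_eq_fintype_card]


end AuxiliaryLemmas

/-- Corollary on the total degree. If `S` is a chain in `P₀`, the values `mᵢ`
with `xᵢ ∉ S` are fixed, and `f` is the polynomial in the variables `mᵢ` (for `xᵢ ∈ S`)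
giving `L₊(P₀; m₁,…,m_{m₀})` as a function of those variables, then the total degree of `f`
equals the sum of the `mᵢ` over those `xᵢ ∉ S` that are incomparable in `P₀` with at least one
element of `S`. -/
theorem lexSum_linearizationCount_polynomial_totalDegree (m₀ : ℕ)
    (r0 : Fin m₀ → Fin m₀ → Prop) (hr0 : IsPartialOrder (Fin m₀) r0)
    (S : Finset (Fin m₀)) (hS : IsChain r0 (↑S : Set (Fin m₀))) (m : Fin m₀ → ℕ)
    (f : MvPolynomial {i : Fin m₀ // i ∈ S} ℚ)
    (hf : ∀ v : {i : Fin m₀ // i ∈ S} → ℕ,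
        (Lplus m₀ r0 (fun i => if h : i ∈ S then v ⟨i, h⟩ else m i) : ℚ) =
          MvPolynomial.eval (fun j => (v j : ℚ)) f) :
    f.totalDegree =
      ∑ i ∈ Finset.univ.filter
          (fun i : Fin m₀ => i ∉ S ∧ ∃ j ∈ S, ¬ r0 i j ∧ ¬ r0 j i), m i := by
  classical
  set T : Finset (Fin m₀) :=
    Finset.univ.filter (fun i : Fin m₀ => i ∉ S ∧ ∃ j ∈ S, ¬ r0 i j ∧ ¬ r0 j i) with hT
  set d : ℕ := ∑ i ∈ T, m i with hd
  set Mt : ℕ := ∑ i, m i with hMt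
  -- upper bound for the total degree
  have hub : f.totalDegree ≤ d := by
    by_contra hgt
    push_neg at hgt
    have hf0 : f ≠ 0 := by
      intro h
      rw [h, MvPolynomial.totalDegree_zero] at hgt
      omega
    have hcomp := homComp_totalDegree_ne_zero f hf0
    obtain ⟨a, ha⟩ := mv_exists_nat_eval_ne_zero _ hcomp
    set q : Polynomial ℚ :=
      MvPolynomial.aeval (fun i => Polynomial.C ((a i : ℚ)) * Polynomial.X) f with hq
    have hco : q.coeff f.totalDegree ≠ 0 := by
      rw [hq, coeff_aeval_linear]
      exact ha
    have hD : f.totalDegree ≤ q.natDegree := Polynomial.le_natDegree_of_ne_zero hco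
    have hev : ∀ n : ℕ, q.eval (n : ℚ) =
        (Lplus m₀ r0 (fun i => if h : i ∈ S then (fun j => a j * n) ⟨i, h⟩ else m i) : ℚ) := by
      intro n
      rw [hq, aeval_linear_eval]
      have e1 : (fun i : {i : Fin m₀ // i ∈ S} => (a i : ℚ) * (n : ℚ)) =
          (fun j : {i : Fin m₀ // i ∈ S} => (((fun j => a j * n) j : ℕ) : ℚ)) := by
        funext j
        push_cast
        ring
      rw [e1, ← hf]
    have h0 : ∀ n : ℕ, 0 ≤ q.eval (n : ℚ) := by
      intro n
      rw [hev n]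
      exact Nat.cast_nonneg _
    set A : ℕ := ∑ j : {i : Fin m₀ // i ∈ S}, a j with hA
    set CuA : ℕ := ((Mt + 1) ^ d * (Mt + 1) ^ Mt) * (1 + A) ^ d with hCuA
    have hbd : ∀ n : ℕ, q.eval (n : ℚ) ≤ (CuA : ℚ) * ((n : ℚ) + 1) ^ d := by
      intro n
      rw [hev n]
      have h1 := lplus_upper m₀ r0 hr0 S hS m (fun j => a j * n)
      rw [← hT, ← hd, ← hMt] at h1
      have h2 : (1 + ∑ j : {i : Fin m₀ // i ∈ S}, a j * n) ≤ (1 + A) * (n + 1) := by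
        have h3 : ∑ j : {i : Fin m₀ // i ∈ S}, a j * n = A * n := by
          rw [hA, Finset.sum_mul]
        rw [h3]
        nlinarith
      have h4 : Lplus m₀ r0 (fun i => if h : i ∈ S then (fun j => a j * n) ⟨i, h⟩ else m i) ≤
          CuA * (n + 1) ^ d := by
        calc Lplus m₀ r0 (fun i => if h : i ∈ S then (fun j => a j * n) ⟨i, h⟩ else m i) ≤
            ((Mt + 1) ^ d * (Mt + 1) ^ Mt) * (1 + ∑ j : {i : Fin m₀ // i ∈ S}, a j * n) ^ d :=
              h1
          _ ≤ ((Mt + 1) ^ d * (Mt + 1) ^ Mt) * ((1 + A) * (n + 1)) ^ d :=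
              Nat.mul_le_mul_left _ (Nat.pow_le_pow_left h2 d)
          _ = CuA * (n + 1) ^ d := by rw [hCuA, mul_pow]; ring
      calc (Lplus m₀ r0 (fun i => if h : i ∈ S then (fun j => a j * n) ⟨i, h⟩ else m i) : ℚ) ≤
          ((CuA * (n + 1) ^ d : ℕ) : ℚ) := by exact_mod_cast h4
        _ = (CuA : ℚ) * ((n : ℚ) + 1) ^ d := by push_cast; ring
    have hune := natDegree_le_of_bounded q (CuA : ℚ) d h0 hbd
    omega
  -- lower bound for the total degree
  have hlb : d ≤ f.totalDegree := by
    rcases Nat.eq_zero_or_pos d with hd0 | hdpos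
    · omega
    · set q : Polynomial ℚ :=
        MvPolynomial.aeval
          (fun _ : {i : Fin m₀ // i ∈ S} => Polynomial.C ((1 : ℚ)) * Polynomial.X) f with hq
      have hqd : q.natDegree ≤ f.totalDegree := by
        have := natDegree_aeval_le f (fun _ : {i : Fin m₀ // i ∈ S} => (1 : ℚ))
        exact this
      have hev : ∀ n : ℕ, q.eval (n : ℚ) =
          (Lplus m₀ r0 (fun i => if h : i ∈ S then n else m i) : ℚ) := by
        intro n
        rw [hq, aeval_linear_eval]
        have e1 : (fun i : {i : Fin m₀ // i ∈ S} => (1 : ℚ) * (n : ℚ)) =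
            (fun j : {i : Fin m₀ // i ∈ S} => (((fun _ : {i : Fin m₀ // i ∈ S} => n) j : ℕ) : ℚ)) := by
          funext j
          push_cast
          ring
        rw [e1, ← hf (fun _ => n)]
      have hlow : ∀ n : ℕ, 2 * d ≤ n → (n : ℚ) ^ d ≤ (((2 * d) ^ d : ℕ) : ℚ) * q.eval (n : ℚ) := by
        intro n hn
        rw [hev n]
        have h1 := lplus_lower m₀ r0 hr0 S hS m n (by rw [← hT, ← hd]; omega) (by rw [← hT, ← hd]; omega)
        rw [← hT, ← hd] at h1
        have hk1 : 0 < n / d := (Nat.one_le_div_iff hdpos).2 (by omega)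
        have hdk : d ≤ d * (n / d) := Nat.le_mul_of_pos_right d hk1
        have hmod := Nat.div_add_mod n d
        have hr : n % d < d := Nat.mod_lt _ hdpos
        have h2 : n ≤ 2 * (d * (n / d)) := by omega
        have h3 : n ^ d ≤ (2 * d) ^ d * (n / d) ^ d := by
          calc n ^ d ≤ (2 * (d * (n / d))) ^ d := Nat.pow_le_pow_left h2 d
            _ = (2 * d) ^ d * (n / d) ^ d := by rw [← mul_pow]; ring_nf
        have h5 : n ^ d ≤ (2 * d) ^ d *
            Lplus m₀ r0 (fun i => if h : i ∈ S then n else m i) :=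
          le_trans h3 (Nat.mul_le_mul_left _ h1)
        show (n : ℚ) ^ d ≤ (((2 * d) ^ d : ℕ) : ℚ) *
          ((Lplus m₀ r0 (fun i => if h : i ∈ S then n else m i) : ℕ) : ℚ)
        exact_mod_cast h5
      have := le_natDegree_of_lb q d hdpos (((2 * d) ^ d : ℕ) : ℚ) (2 * d) hlow
      omega
  omega
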